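/- Let A be an integral domain and S ⊆ A a multiplicative set with 1 ∈ S such that the localization S⁻¹A is a field. Then the zero ideal is the only weakly S-prime ideal of A. -/

import Mathlib

/-- If A is a domain and S⁻¹A is a field, the zero ideal is the only weakly
S-prime ideal of A. -/
theorem stmt_18 {A : Type*} [CommRing A] [IsDomain A] (S : Submonoid A)
    (hfield : IsField (Localization S)) :
    ∀ Q : Ideal A,
      ((Q : Set A) ∩ (S : Set A) = ∅ ∧
        ∃ s ∈ S, ∀ x y : A, x * y ≠ 0 → x * y ∈ Q → s * x ∈ Q ∨ s * y ∈ Q) ↔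
      Q = ⊥ := by
  -- 0 ∉ S
  have h0S : (0 : A) ∉ S := by
    intro h0
    have : Subsingleton (Localization S) := IsLocalization.subsingleton h0
    obtain ⟨x, y, hxy⟩ := hfield.exists_pair_ne
    exact hxy (Subsingleton.elim _ _)
  have hle : S ≤ nonZeroDivisors A := fun s hs =>
    mem_nonZeroDivisors_of_ne_zero (fun h => h0S (h ▸ hs))
  have hinj : Function.Injective (algebraMap A (Localization S)) :=
    IsLocalization.injective _ hle
  intro Q
  constructor
  · rintro ⟨hdisj, -⟩
    ext q
    simp only [Ideal.mem_bot]
    constructor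
    · intro hq
      by_contra hq0
      -- q maps to a unit in the field
      have hne : algebraMap A (Localization S) q ≠ 0 := fun h =>
        hq0 (hinj (h.trans (map_zero _).symm))
      obtain ⟨z, hz⟩ := hfield.mul_inv_cancel hne
      obtain ⟨b, t, hbt⟩ := IsLocalization.exists_mk'_eq (M := S) (S := Localization S) z
      rw [← hbt, ← IsLocalization.mk'_one (M := S) (Localization S) q,
        ← IsLocalization.mk'_mul, IsLocalization.mk'_eq_iff_eq_mul, one_mul] at hz
      have heq : q * b = ((1 * t : S) : A) := hinj hz
      have hmem : q * b ∈ (Q : Set A) ∩ (S : Set A) := by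
        constructor
        · exact Q.mul_mem_right b hq
        · have : q * b = (t : A) := by rw [heq]; push_cast; ring
          rw [this]; exact t.2
      rw [hdisj] at hmem
      exact hmem.elim
    · rintro rfl; exact Q.zero_mem
  · rintro rfl
    refine ⟨?_, 1, S.one_mem, fun x y hxy hxy0 => absurd hxy0 (by simpa using hxy)⟩
    ext a
    simp only [Set.mem_inter_iff, SetLike.mem_coe, Ideal.mem_bot, Set.mem_empty_iff_false,
      iff_false, not_and]
    rintro rfl
    exact h0S
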